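/- If every service rate is non-decreasing, i.e. ν_j(i) ≤ ν_j(i+1) for all i ≥ 1 and all j = 1,…,J, then the function λ_eff is strictly increasing on (0, ∞); in particular, for each λ ∈ (0, λ_max) there is at most one x ∈ (0, ∞) with λ_eff(x) = λ. -/

import Mathlib

open Finset

/-- `Cstb J η ν m` is the normalisation constant `C^stb(m)` of the stability network:
the sum over tuples `(n₁,…,n_J)` with `n₁+⋯+n_J = m` of `∏_j ∏_{i=1}^{n_j} η_j/ν_j(i)`. -/
noncomputable def Cstb (J : ℕ) (η : Fin J → ℝ) (ν : Fin J → ℕ → ℝ) (m : ℕ) : ℝ :=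
  ∑ n ∈ Finset.Nat.antidiagonalTuple J m,
    ∏ j, ∏ i ∈ Finset.range (n j), η j / ν j (i + 1)

/-- The effective arrival rate of the lost-customers modification with arrival rate `x`. -/
noncomputable def lamEff (J N : ℕ) (η0 : ℝ) (η : Fin J → ℝ) (ν : Fin J → ℕ → ℝ)
    (x : ℝ) : ℝ :=
  x * (1 - Cstb J η ν N /
    ∑ n0 ∈ Finset.range (N + 1), (η0 / x) ^ n0 * Cstb J η ν (N - n0))

lemma binet_ineq {ι : Type*} (s : Finset ι) (a b c d : ι → ℝ)
    (h : ∀ p ∈ s, ∀ q ∈ s, 0 ≤ (a p * b q - a q * b p) * (c p * d q - c q * d p)) :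
    (∑ p ∈ s, a p * d p) * (∑ q ∈ s, b q * c q) ≤ (∑ p ∈ s, a p * c p) * (∑ q ∈ s, b q * d q) := by
  have expand : ∀ p q : ι, (a p * b q - a q * b p) * (c p * d q - c q * d p)
      = (a p * c p) * (b q * d q) + (b p * d p) * (a q * c q)
        - (a p * d p) * (b q * c q) - (b p * c p) * (a q * d q) := by intros; ring
  have key : (∑ p ∈ s, ∑ q ∈ s, (a p * b q - a q * b p) * (c p * d q - c q * d p))
      = (∑ p ∈ s, a p * c p) * (∑ q ∈ s, b q * d q) + (∑ p ∈ s, b p * d p) * (∑ q ∈ s, a q * c q)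
        - (∑ p ∈ s, a p * d p) * (∑ q ∈ s, b q * c q) - (∑ p ∈ s, b p * c p) * (∑ q ∈ s, a q * d q) := by
    simp only [expand, Finset.sum_add_distrib, Finset.sum_sub_distrib, ← Finset.mul_sum,
      ← Finset.sum_mul]
  have pos : 0 ≤ ∑ p ∈ s, ∑ q ∈ s, (a p * b q - a q * b p) * (c p * d q - c q * d p) :=
    Finset.sum_nonneg fun p hp => Finset.sum_nonneg fun q hq => h p hp q hq
  have comm1 : (∑ p ∈ s, b p * d p) * (∑ q ∈ s, a q * c q)
      = (∑ p ∈ s, a p * c p) * (∑ q ∈ s, b q * d q) := by ring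
  have comm2 : (∑ p ∈ s, b p * c p) * (∑ q ∈ s, a q * d q)
      = (∑ p ∈ s, a p * d p) * (∑ q ∈ s, b q * c q) := by ring
  linarith [key, pos]

lemma lc_step {u : ℕ → ℝ} (hpos : ∀ k, 0 < u k) (hlc : ∀ k, u k * u (k+2) ≤ u (k+1)^2) :
    ∀ a b : ℕ, a ≤ b → u a * u (b+1) ≤ u (a+1) * u b := by
  intro a b hab
  induction b, hab using Nat.le_induction with
  | base => rw [mul_comm]
  | succ b hab IH =>
    have h1 : u a * u (b+1) * u (b+2) ≤ u (a+1) * u b * u (b+2) :=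
      mul_le_mul_of_nonneg_right IH (hpos (b+2)).le
    have h2 : u (a+1) * (u b * u (b+2)) ≤ u (a+1) * (u (b+1))^2 :=
      mul_le_mul_of_nonneg_left (hlc b) (hpos (a+1)).le
    have := (hpos (b+1))
    have goal' : u a * u (b+2) * u (b+1) ≤ u (a+1) * u (b+1) * u (b+1) := by nlinarith
    exact le_of_mul_le_mul_right (by linarith [goal']) this

lemma lc_spread {u : ℕ → ℝ} (hpos : ∀ k, 0 < u k) (hlc : ∀ k, u k * u (k+2) ≤ u (k+1)^2) :
    ∀ (k a d : ℕ), a + k ≤ d → u a * u (d + k) ≤ u (a + k) * u d := by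
  intro k
  induction k with
  | zero => intro a d _; simp
  | succ k IH =>
    intro a d h
    have h1 : u a * u (d + k + 1) ≤ u (a+1) * u (d + k) :=
      lc_step hpos hlc a (d + k) (by omega)
    have h2 : u (a+1) * u (d + k) ≤ u (a + 1 + k) * u d := IH (a+1) d (by omega)
    calc u a * u (d + (k+1)) = u a * u (d + k + 1) := by ring_nf
      _ ≤ u (a+1) * u (d + k) := h1
      _ ≤ u (a + 1 + k) * u d := h2
      _ = u (a + (k+1)) * u d := by ring_nf

noncomputable def zext (u : ℕ → ℝ) (z : ℤ) : ℝ := if 0 ≤ z then u z.toNat else 0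

lemma zext_nonneg {u : ℕ → ℝ} (hpos : ∀ k, 0 < u k) (z : ℤ) : 0 ≤ zext u z := by
  unfold zext; split
  · exact (hpos _).le
  · exact le_refl 0

lemma zext_step {u : ℕ → ℝ} (hpos : ∀ k, 0 < u k) (hlc : ∀ k, u k * u (k+2) ≤ u (k+1)^2) :
    ∀ x y : ℤ, x ≤ y + 1 → zext u (x - 1) * zext u (y + 1) ≤ zext u x * zext u y := by
  intro x y hxy
  by_cases hx : 1 ≤ x
  · have hy : 0 ≤ y := by omega
    have e1 : zext u (x-1) = u (x-1).toNat := by unfold zext; rw [if_pos (by omega)]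
    have e2 : zext u (y+1) = u ((x-1).toNat + ((y+1).toNat - (x-1).toNat)) := by
      unfold zext; rw [if_pos (by omega)]; congr 1; omega
    have e3 : zext u x = u ((x-1).toNat + 1) := by
      unfold zext; rw [if_pos (by omega)]; congr 1; omega
    have e4 : zext u y = u ((x-1).toNat + ((y+1).toNat - (x-1).toNat) - 1) := by
      unfold zext; rw [if_pos hy]; congr 1; omega
    rw [e1, e2, e3, e4]
    set A := (x-1).toNat with hA
    set B := (y+1).toNat - A with hB
    have hB1 : 1 ≤ B := by omega
    have step := lc_step hpos hlc A (A + (B-1)) (by omega)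
    have eA : A + (B-1) + 1 = A + B := by omega
    have eB : A + (B-1) = A + B - 1 := by omega
    rw [eA, eB] at step
    exact step
  · have : zext u (x - 1) = 0 := by unfold zext; rw [if_neg (by omega)]
    rw [this, zero_mul]
    exact mul_nonneg (zext_nonneg hpos _) (zext_nonneg hpos _)

lemma zext_sum_eq {u v : ℕ → ℝ} (M R : ℕ) (h : M + 1 ≤ R) :
    ∑ p ∈ range R, zext u p * zext v ((M:ℤ) - p) = ∑ p ∈ range (M+1), u p * v (M - p) := by
  rw [← Finset.sum_subset (Finset.range_subset_range.2 h)]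
  · apply Finset.sum_congr rfl
    intro p hp
    have hpM : p ≤ M := by simpa [Nat.lt_succ_iff] using hp
    have h1 : ((p : ℤ)).toNat = p := Int.toNat_natCast p
    have h2 : (((M:ℤ) - (p:ℤ))).toNat = M - p := by omega
    have c1 : (0:ℤ) ≤ (p:ℤ) := by positivity
    have c2 : (0:ℤ) ≤ (M:ℤ) - p := by omega
    simp [zext, h1, h2, c1, c2]
    intro hMp; omega
  · intro p hp hnp
    have : ¬ (0 : ℤ) ≤ (M:ℤ) - p := by
      simp only [Finset.mem_range] at hp hnp; omega
    unfold zext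
    rw [if_neg this, mul_zero]

lemma conv_lc {u v : ℕ → ℝ} (hu : ∀ k, 0 < u k) (hv : ∀ k, 0 < v k)
    (hulc : ∀ k, u k * u (k+2) ≤ u (k+1)^2) (hvlc : ∀ k, v k * v (k+2) ≤ v (k+1)^2) (m : ℕ) :
    (∑ p ∈ range (m+3), u p * v (m+2-p)) * (∑ p ∈ range (m+1), u p * v (m - p))
      ≤ (∑ p ∈ range (m+2), u p * v (m+1-p))^2 := by
  have H : ∀ p q : ℕ, p ≤ q →
      0 ≤ (zext u p * zext u ((q:ℤ)-1) - zext u q * zext u ((p:ℤ)-1))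
        * (zext v ((m:ℤ)+1-p) * zext v ((m:ℤ)+2-q) - zext v ((m:ℤ)+1-q) * zext v ((m:ℤ)+2-p)) := by
    intro p q hpq
    apply mul_nonneg
    · have := zext_step hu hulc p (q-1) (by omega)
      have e : (q:ℤ) - 1 + 1 = q := by ring
      rw [e] at this
      linarith
    · have := zext_step hv hvlc ((m:ℤ)+2-q) ((m:ℤ)+1-p) (by omega)
      have e1 : (m:ℤ)+2-q-1 = (m:ℤ)+1-q := by ring
      have e2 : (m:ℤ)+1-p+1 = (m:ℤ)+2-p := by ring
      rw [e1, e2] at this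
      linarith
  have key := binet_ineq (range (m+3)) (fun p => zext u p) (fun p => zext u ((p:ℤ) - 1))
    (fun p => zext v ((m:ℤ)+1-p)) (fun p => zext v ((m:ℤ)+2-p)) ?_
  · have eac : ∑ p ∈ range (m+3), zext u p * zext v ((m:ℤ)+1-p)
        = ∑ p ∈ range (m+2), u p * v (m+1-p) := by
      rw [← zext_sum_eq (u := u) (v := v) (m+1) (m+3) (by omega)]
      apply Finset.sum_congr rfl; intro p _
      have : ((m+1:ℕ):ℤ) - p = (m:ℤ)+1-p := by push_cast; ring
      rw [this]
    have ead : ∑ p ∈ range (m+3), zext u p * zext v ((m:ℤ)+2-p)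
        = ∑ p ∈ range (m+3), u p * v (m+2-p) := by
      rw [← zext_sum_eq (u := u) (v := v) (m+2) (m+3) (by omega)]
      apply Finset.sum_congr rfl; intro p _
      have : ((m+2:ℕ):ℤ) - p = (m:ℤ)+2-p := by push_cast; ring
      rw [this]
    have ebd : ∑ p ∈ range (m+3), zext u ((p:ℤ)-1) * zext v ((m:ℤ)+2-p)
        = ∑ p ∈ range (m+2), u p * v (m+1-p) := by
      rw [Finset.sum_range_succ' (fun p => zext u ((p:ℤ)-1) * zext v ((m:ℤ)+2-p)) (m+2)]
      have h0' : zext u (((0:ℕ):ℤ)-1) = 0 := by unfold zext; rw [if_neg (by simp)]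
      rw [h0', zero_mul, add_zero]
      rw [← zext_sum_eq (u := u) (v := v) (m+1) (m+2) (by omega)]
      apply Finset.sum_congr rfl; intro p _
      have e1 : ((p+1:ℕ):ℤ) - 1 = (p:ℤ) := by push_cast; ring
      have e2 : (m:ℤ)+2-((p+1:ℕ):ℤ) = ((m+1:ℕ):ℤ) - p := by push_cast; ring
      rw [e1, e2]
    have ebc : ∑ p ∈ range (m+3), zext u ((p:ℤ)-1) * zext v ((m:ℤ)+1-p)
        = ∑ p ∈ range (m+1), u p * v (m-p) := by
      rw [Finset.sum_range_succ' (fun p => zext u ((p:ℤ)-1) * zext v ((m:ℤ)+1-p)) (m+2)]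
      have h0' : zext u (((0:ℕ):ℤ)-1) = 0 := by unfold zext; rw [if_neg (by simp)]
      rw [h0', zero_mul, add_zero]
      rw [← zext_sum_eq (u := u) (v := v) m (m+2) (by omega)]
      apply Finset.sum_congr rfl; intro p _
      have e1 : ((p+1:ℕ):ℤ) - 1 = (p:ℤ) := by push_cast; ring
      have e2 : (m:ℤ)+1-((p+1:ℕ):ℤ) = ((m:ℕ):ℤ) - p := by push_cast; ring
      rw [e1, e2]
    calc (∑ p ∈ range (m+3), u p * v (m+2-p)) * (∑ p ∈ range (m+1), u p * v (m - p))
        = (∑ p ∈ range (m+3), zext u p * zext v ((m:ℤ)+2-p))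
          * (∑ p ∈ range (m+3), zext u ((p:ℤ)-1) * zext v ((m:ℤ)+1-p)) := by rw [ead, ebc]
      _ ≤ (∑ p ∈ range (m+3), zext u p * zext v ((m:ℤ)+1-p))
          * (∑ p ∈ range (m+3), zext u ((p:ℤ)-1) * zext v ((m:ℤ)+2-p)) := key
      _ = (∑ p ∈ range (m+2), u p * v (m+1-p))^2 := by rw [eac, ebd]; ring
  · intro p _ q _
    rcases le_total p q with hpq | hpq
    · exact H p q hpq
    · have e : (zext u p * zext u ((q:ℤ)-1) - zext u q * zext u ((p:ℤ)-1))
        * (zext v ((m:ℤ)+1-p) * zext v ((m:ℤ)+2-q) - zext v ((m:ℤ)+1-q) * zext v ((m:ℤ)+2-p))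
        = (zext u q * zext u ((p:ℤ)-1) - zext u p * zext u ((q:ℤ)-1))
        * (zext v ((m:ℤ)+1-q) * zext v ((m:ℤ)+2-p) - zext v ((m:ℤ)+1-p) * zext v ((m:ℤ)+2-q)) := by
        ring
      rw [e]
      exact H q p hpq

lemma Cstb_one (η : Fin 1 → ℝ) (ν : Fin 1 → ℕ → ℝ) (m : ℕ) :
    Cstb 1 η ν m = ∏ i ∈ range m, η 0 / ν 0 (i + 1) := by
  unfold Cstb
  rw [Finset.Nat.antidiagonalTuple_one, Finset.sum_singleton, Fin.prod_univ_one]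
  simp

lemma Cstb_succ (J : ℕ) (η : Fin (J+1) → ℝ) (ν : Fin (J+1) → ℕ → ℝ) (m : ℕ) :
    Cstb (J+1) η ν m = ∑ p ∈ range (m+1),
      (∏ i ∈ range p, η 0 / ν 0 (i+1)) * Cstb J (fun j => η j.succ) (fun j => ν j.succ) (m - p) := by
  unfold Cstb
  simp only [Finset.mul_sum]
  rw [Finset.sum_sigma' (range (m+1)) (fun p => Finset.Nat.antidiagonalTuple J (m-p))]
  refine Finset.sum_nbij' (i := fun n => (⟨n 0, Fin.tail n⟩ : Σ _ : ℕ, Fin J → ℕ))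
    (j := fun x => Fin.cons x.1 x.2) ?_ ?_ ?_ ?_ ?_
  · intro n hn
    rw [Finset.Nat.mem_antidiagonalTuple] at hn
    rw [Finset.mem_sigma, Finset.mem_range, Finset.Nat.mem_antidiagonalTuple]
    have h0 : n 0 + ∑ j : Fin J, Fin.tail n j = m := by
      rw [← hn, Fin.sum_univ_succ]; rfl
    generalize hS : (∑ j : Fin J, Fin.tail n j) = S at h0 ⊢
    show n 0 < m + 1 ∧ S = m - n 0
    omega
  · rintro ⟨p, t⟩ hx
    rw [Finset.mem_sigma] at hx
    obtain ⟨hp, ht⟩ := hx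
    rw [Finset.Nat.mem_antidiagonalTuple] at ht ⊢
    rw [Fin.sum_cons, ht]
    rw [Finset.mem_range] at hp
    omega
  · intro n hn
    simp [Fin.cons_self_tail]
  · rintro ⟨p, t⟩ hx
    simp [Fin.tail_cons]
  · intro n hn
    rw [Finset.Nat.mem_antidiagonalTuple] at hn
    rw [Fin.prod_univ_succ]
    have e : m - n 0 = ∑ j : Fin J, Fin.tail n j := by
      have h0 : n 0 + ∑ j : Fin J, Fin.tail n j = m := by
        rw [← hn, Fin.sum_univ_succ]; rfl
      generalize hS : (∑ j : Fin J, Fin.tail n j) = S at h0 ⊢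
      omega
    congr 1

lemma single_pos {e : ℝ} (he : 0 < e) {w : ℕ → ℝ} (hw : ∀ i, 1 ≤ i → 0 < w i) (p : ℕ) :
    0 < ∏ i ∈ range p, e / w (i + 1) := by
  apply Finset.prod_pos
  intro i _
  exact div_pos he (hw (i+1) (by omega))

lemma single_lc {e : ℝ} (he : 0 < e) {w : ℕ → ℝ} (hw : ∀ i, 1 ≤ i → 0 < w i)
    (hm : ∀ i, 1 ≤ i → w i ≤ w (i+1)) (m : ℕ) :
    (∏ i ∈ range m, e / w (i + 1)) * (∏ i ∈ range (m+2), e / w (i + 1))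
      ≤ (∏ i ∈ range (m+1), e / w (i + 1))^2 := by
  rw [Finset.prod_range_succ, Finset.prod_range_succ]
  have hP := single_pos he hw m
  have h1 : 0 < w (m+1) := hw (m+1) (by omega)
  have h2 : 0 < w (m+2) := hw (m+2) (by omega)
  have key : e / w (m+1+1) ≤ e / w (m+1) := by
    gcongr
    exact hm (m+1) (by omega)
  have hd : 0 ≤ e / w (m+1) := (div_pos he h1).le
  nlinarith [mul_le_mul_of_nonneg_left key (mul_nonneg (mul_nonneg hP.le hP.le) hd)]

lemma Cstb_pos_lc : ∀ (J : ℕ) (η : Fin (J+1) → ℝ), (∀ j, 0 < η j) →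
    ∀ (ν : Fin (J+1) → ℕ → ℝ), (∀ j i, 1 ≤ i → 0 < ν j i) → (∀ j i, 1 ≤ i → ν j i ≤ ν j (i+1)) →
    (∀ m, 0 < Cstb (J+1) η ν m) ∧
      (∀ m, Cstb (J+1) η ν m * Cstb (J+1) η ν (m+2) ≤ Cstb (J+1) η ν (m+1)^2) := by
  intro J
  induction J with
  | zero =>
    intro η hη ν hν hmono
    constructor
    · intro m; rw [Cstb_one]; exact single_pos (hη 0) (hν 0) m
    · intro m; rw [Cstb_one, Cstb_one, Cstb_one]; exact single_lc (hη 0) (hν 0) (hmono 0) m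
  | succ J IH =>
    intro η hη ν hν hmono
    obtain ⟨hp, hlc⟩ := IH (fun j => η j.succ) (fun j => hη _) (fun j => ν j.succ)
      (fun j i h => hν _ i h) (fun j i h => hmono _ i h)
    have hu : ∀ p, 0 < ∏ i ∈ range p, η 0 / ν 0 (i + 1) := single_pos (hη 0) (hν 0)
    constructor
    · intro m
      rw [Cstb_succ]
      apply Finset.sum_pos
      · intro p _; exact mul_pos (hu p) (hp _)
      · exact ⟨0, Finset.mem_range.2 (by omega)⟩
    · intro m
      rw [Cstb_succ, Cstb_succ, Cstb_succ]
      rw [mul_comm]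
      exact conv_lc hu hp (single_lc (hη 0) (hν 0) (hmono 0)) hlc m

lemma spread2 {C : ℕ → ℝ} {N : ℕ} (hC : ∀ m, 0 < C m)
    (hlc : ∀ k, C k * C (k+2) ≤ C (k+1)^2) (p q : ℕ) (h : p + q + 2 ≤ N) :
    C N * C (N-1-(p+q+1)) ≤ C (N-1-p) * C (N-1-q) := by
  have core : ∀ p q : ℕ, q ≤ p → p + q + 2 ≤ N →
      C N * C (N-1-(p+q+1)) ≤ C (N-1-p) * C (N-1-q) := by
    intro p q hqp h
    have key := lc_spread hC hlc (q+1) (N-2-p-q) (N-1-q) (by omega)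
    rw [show N-1-q + (q+1) = N by omega, show N-2-p-q + (q+1) = N-1-p by omega] at key
    rw [show N-1-(p+q+1) = N-2-p-q by omega, mul_comm]
    exact key
  rcases le_total q p with hqp | hpq
  · exact core p q hqp h
  · have := core q p hpq (by omega)
    rw [show q+p+1 = p+q+1 by omega] at this
    linarith [this]

lemma key_lt {C : ℕ → ℝ} {N : ℕ} (hN : 1 ≤ N) (hC : ∀ m, 0 < C m)
    (hlc : ∀ k, C k * C (k+2) ≤ C (k+1)^2) {s t : ℝ} (hs : 0 < s) (hst : s < t) :
    C N * ((∑ k ∈ range N, t^k * C (N-1-k)) - (∑ k ∈ range N, s^k * C (N-1-k)))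
      < (t - s) * ((∑ k ∈ range N, t^k * C (N-1-k)) * (∑ k ∈ range N, s^k * C (N-1-k))) := by
  have ht : 0 < t := hs.trans hst
  -- Step 1: difference factorization
  have geo : (∑ k ∈ range N, t^k * C (N-1-k)) - (∑ k ∈ range N, s^k * C (N-1-k))
      = (t - s) * ∑ k ∈ range N, (∑ p ∈ range k, t^p * s^(k-1-p)) * C (N-1-k) := by
    rw [← Finset.sum_sub_distrib, Finset.mul_sum]
    apply Finset.sum_congr rfl
    intro k _
    have := geom_sum₂_mul t s k
    calc t^k * C (N-1-k) - s^k * C (N-1-k) = (t^k - s^k) * C (N-1-k) := by ring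
      _ = ((∑ p ∈ range k, t^p * s^(k-1-p)) * (t - s)) * C (N-1-k) := by rw [this]
      _ = (t - s) * ((∑ p ∈ range k, t^p * s^(k-1-p)) * C (N-1-k)) := by ring
  rw [geo, ← mul_assoc, mul_comm (C N) (t - s), mul_assoc]
  apply mul_lt_mul_of_pos_left _ (by linarith : (0:ℝ) < t - s)
  -- Step 2: reindex LHS
  have lhs_eq : C N * ∑ k ∈ range N, (∑ p ∈ range k, t^p * s^(k-1-p)) * C (N-1-k)
      = ∑ pq ∈ (range N ×ˢ range N).filter (fun pq => pq.1 + pq.2 + 2 ≤ N),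
          t^pq.1 * s^pq.2 * (C N * C (N-1-(pq.1+pq.2+1))) := by
    rw [Finset.mul_sum]
    have inner : ∀ k, C N * ((∑ p ∈ range k, t^p * s^(k-1-p)) * C (N-1-k))
        = ∑ p ∈ range k, t^p * s^(k-1-p) * (C N * C (N-1-k)) := by
      intro k
      rw [Finset.sum_mul, Finset.mul_sum]
      apply Finset.sum_congr rfl; intro p _; ring
    rw [Finset.sum_congr rfl (fun k _ => inner k)]
    rw [Finset.sum_sigma' (range N) (fun k => range k)
      (fun k p => t^p * s^(k-1-p) * (C N * C (N-1-k)))]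
    refine Finset.sum_nbij' (i := fun x => (x.2, x.1 - 1 - x.2))
      (j := fun pq => ⟨pq.1 + pq.2 + 1, pq.1⟩) ?_ ?_ ?_ ?_ ?_
    · rintro ⟨k, p⟩ hx
      rw [Finset.mem_sigma, Finset.mem_range, Finset.mem_range] at hx
      dsimp only at hx ⊢
      rw [Finset.mem_filter, Finset.mem_product, Finset.mem_range, Finset.mem_range]
      refine ⟨⟨?_, ?_⟩, ?_⟩ <;> omega
    · rintro ⟨p, q⟩ hpq
      rw [Finset.mem_filter, Finset.mem_product, Finset.mem_range, Finset.mem_range] at hpq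
      dsimp only at hpq ⊢
      rw [Finset.mem_sigma, Finset.mem_range, Finset.mem_range]
      dsimp only
      constructor <;> omega
    · rintro ⟨k, p⟩ hx
      rw [Finset.mem_sigma, Finset.mem_range, Finset.mem_range] at hx
      dsimp only at hx ⊢
      rw [show p + (k - 1 - p) + 1 = k by omega]
    · rintro ⟨p, q⟩ hpq
      dsimp only
      congr 1 <;> omega
    · rintro ⟨k, p⟩ hx
      rw [Finset.mem_sigma, Finset.mem_range, Finset.mem_range] at hx
      dsimp only at hx ⊢
      rw [show p + (k - 1 - p) + 1 = k by omega]
  rw [lhs_eq]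
  -- Step 3: termwise bound then strict subset
  have step3 : ∑ pq ∈ (range N ×ˢ range N).filter (fun pq => pq.1 + pq.2 + 2 ≤ N),
        t^pq.1 * s^pq.2 * (C N * C (N-1-(pq.1+pq.2+1)))
      ≤ ∑ pq ∈ (range N ×ˢ range N).filter (fun pq => pq.1 + pq.2 + 2 ≤ N),
        t^pq.1 * s^pq.2 * (C (N-1-pq.1) * C (N-1-pq.2)) := by
    apply Finset.sum_le_sum
    rintro ⟨p, q⟩ hpq
    rw [Finset.mem_filter] at hpq
    have hb := spread2 hC hlc p q hpq.2
    have hts : 0 ≤ t^p * s^q := by positivity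
    exact mul_le_mul_of_nonneg_left hb hts
  have step4 : ∑ pq ∈ (range N ×ˢ range N).filter (fun pq => pq.1 + pq.2 + 2 ≤ N),
        t^pq.1 * s^pq.2 * (C (N-1-pq.1) * C (N-1-pq.2))
      < ∑ pq ∈ range N ×ˢ range N, t^pq.1 * s^pq.2 * (C (N-1-pq.1) * C (N-1-pq.2)) := by
    apply Finset.sum_lt_sum_of_subset (Finset.filter_subset _ _)
      (i := ((N-1 : ℕ), (N-1 : ℕ)))
    · simp only [Finset.mem_product, Finset.mem_range]; omega
    · simp only [Finset.mem_filter]; push_neg; intro _; omega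
    · exact mul_pos (mul_pos (pow_pos ht _) (pow_pos hs _)) (mul_pos (hC _) (hC _))
    · rintro ⟨p, q⟩ _ _
      exact le_of_lt (mul_pos (mul_pos (pow_pos ht _) (pow_pos hs _)) (mul_pos (hC _) (hC _)))
  have rhs_eq : (∑ k ∈ range N, t^k * C (N-1-k)) * (∑ k ∈ range N, s^k * C (N-1-k))
      = ∑ pq ∈ range N ×ˢ range N, t^pq.1 * s^pq.2 * (C (N-1-pq.1) * C (N-1-pq.2)) := by
    rw [Finset.sum_mul_sum]
    rw [Finset.sum_product]
    apply Finset.sum_congr rfl; intro p _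
    apply Finset.sum_congr rfl; intro q _
    ring
  rw [rhs_eq]
  exact lt_of_le_of_lt step3 step4

/-- If all service rates are non-decreasing, then `λ_eff` is strictly increasing on `(0,∞)`;
in particular for each `λ ∈ (0, λ_max)` there is at most one `x > 0` with `λ_eff(x) = λ`. -/
theorem lamEff_strictMonoOn
    (J N : ℕ) (hJ : 1 ≤ J) (hN : 1 ≤ N)
    (η0 : ℝ) (hη0 : 0 < η0)
    (η : Fin J → ℝ) (hη : ∀ j, 0 < η j)
    (ν : Fin J → ℕ → ℝ) (hν : ∀ j i, 1 ≤ i → 0 < ν j i)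
    (hmono : ∀ j i, 1 ≤ i → ν j i ≤ ν j (i + 1)) :
    StrictMonoOn (lamEff J N η0 η ν) (Set.Ioi 0) ∧
    ∀ lam : ℝ, 0 < lam → lam < η0 * Cstb J η ν (N - 1) / Cstb J η ν N →
      ∀ x y : ℝ, 0 < x → 0 < y →
        lamEff J N η0 η ν x = lam → lamEff J N η0 η ν y = lam → x = y := by
  obtain ⟨J', rfl⟩ : ∃ J', J = J' + 1 := ⟨J - 1, by omega⟩
  obtain ⟨hCpos, hClc⟩ := Cstb_pos_lc J' η hη ν hν hmono
  have hClc' : ∀ k, Cstb (J'+1) η ν k * Cstb (J'+1) η ν (k+2) ≤ Cstb (J'+1) η ν (k+1)^2 := hClc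
  set A : ℝ → ℝ := fun r => ∑ k ∈ range N, r^k * Cstb (J'+1) η ν (N-1-k) with hAdef
  have hB : ∀ r : ℝ, (∑ n0 ∈ range (N+1), r^n0 * Cstb (J'+1) η ν (N-n0))
      = Cstb (J'+1) η ν N + r * A r := by
    intro r
    rw [Finset.sum_range_succ']
    simp only [pow_zero, Nat.sub_zero, one_mul]
    rw [add_comm]
    congr 1
    rw [hAdef, Finset.mul_sum]
    apply Finset.sum_congr rfl
    intro k _
    rw [show N - (k+1) = N-1-k by omega]
    ring
  have hApos : ∀ r : ℝ, 0 < r → 0 < A r := by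
    intro r hr
    apply Finset.sum_pos
    · intro k _
      exact mul_pos (pow_pos hr k) (hCpos _)
    · exact ⟨0, Finset.mem_range.2 (by omega)⟩
  have hlam : ∀ z : ℝ, 0 < z → lamEff (J'+1) N η0 η ν z
      = η0 * A (η0/z) / (Cstb (J'+1) η ν N + (η0/z) * A (η0/z)) := by
    intro z hz
    have ht : 0 < η0 / z := div_pos hη0 hz
    have hden : 0 < Cstb (J'+1) η ν N + (η0/z) * A (η0/z) :=
      add_pos (hCpos N) (mul_pos ht (hApos _ ht))
    unfold lamEff
    rw [hB (η0/z)]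
    have hAa : 0 < A (η0 / z) := hApos _ ht
    generalize hga : A (η0 / z) = a at hden hAa ⊢
    have hD : z * Cstb (J'+1) η ν N + η0 * a ≠ 0 :=
      ne_of_gt (add_pos (mul_pos hz (hCpos N)) (mul_pos hη0 hAa))
    have hD' : Cstb (J'+1) η ν N * z + η0 * a ≠ 0 := by
      rw [mul_comm (Cstb (J'+1) η ν N) z]; exact hD
    field_simp [hz.ne', hD]
    ring
  have hmonoOn : StrictMonoOn (lamEff (J'+1) N η0 η ν) (Set.Ioi 0) := by
    intro x hx y hy hxy
    rw [Set.mem_Ioi] at hx hy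
    rw [hlam x hx, hlam y hy]
    have hs : 0 < η0 / y := div_pos hη0 hy
    have ht : 0 < η0 / x := div_pos hη0 hx
    have hts : η0 / y < η0 / x := by
      apply div_lt_div_of_pos_left hη0 hx hxy
    have hdent : 0 < Cstb (J'+1) η ν N + (η0/x) * A (η0/x) :=
      add_pos (hCpos N) (mul_pos ht (hApos _ ht))
    have hdens : 0 < Cstb (J'+1) η ν N + (η0/y) * A (η0/y) :=
      add_pos (hCpos N) (mul_pos hs (hApos _ hs))
    rw [div_lt_div_iff₀ hdent hdens]
    have key := key_lt (C := Cstb (J'+1) η ν) hN hCpos hClc' hs hts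
    have key2 := mul_lt_mul_of_pos_left key hη0
    nlinarith [key2]
  refine ⟨hmonoOn, ?_⟩
  intro lam _ _ x y hx hy hex hey
  exact hmonoOn.injOn (Set.mem_Ioi.2 hx) (Set.mem_Ioi.2 hy) (hex.trans hey.symm)
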